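/- Let λ_M, λ_S > 0, α_M, α_S > 0, c > 0, and let X_M, X_S be independent with densities f_{X_k}(x) = 2πλ_k x exp(−πλ_k x²) on [0,∞). Define p = P(X_M < c^{1/α_M} X_S^{α_S/α_M}) and assume p > 0. Then the conditional density of X_M given the event {X_M < c^{1/α_M} X_S^{α_S/α_M}} is f(x) = exp(−πλ_S c^{−2/α_S} x^{2α_M/α_S}) · 2πλ_M x exp(−πλ_M x²) / p for x ≥ 0. -/

import Mathlib

open MeasureTheory ProbabilityTheory Real Set

noncomputable def rayleighPdf (lam x : ℝ) : ℝ :=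
  if 0 ≤ x then 2 * π * lam * x * Real.exp (-(π * lam * x ^ 2)) else 0

lemma rayleighPdf_nonneg (lam : ℝ) (hlam : 0 < lam) (x : ℝ) : 0 ≤ rayleighPdf lam x := by
  unfold rayleighPdf
  split
  · have hπ := Real.pi_pos
    exact mul_nonneg (mul_nonneg (by positivity) ‹0 ≤ x›) (Real.exp_nonneg _)
  · exact le_refl 0

lemma rayleighPdf_nonpos (lam : ℝ) {x : ℝ} (hx : x ≤ 0) : rayleighPdf lam x = 0 := by
  unfold rayleighPdf
  split
  · have : x = 0 := le_antisymm hx ‹0 ≤ x›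
    simp [this]
  · rfl

lemma measurable_rayleighPdf (lam : ℝ) : Measurable (rayleighPdf lam) := by
  unfold rayleighPdf
  exact Measurable.ite measurableSet_Ici
    ((measurable_const.mul measurable_id).mul
      ((measurable_id.pow_const 2).const_mul _).neg.exp) measurable_const

lemma tail_lintegral (lam t : ℝ) (hlam : 0 < lam) (ht : 0 ≤ t) :
    ∫⁻ y in Set.Ioi t, ENNReal.ofReal (2 * π * lam * y * Real.exp (-(π * lam * y ^ 2))) =
      ENNReal.ofReal (Real.exp (-(π * lam * t ^ 2))) := by
  have hπ := Real.pi_pos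
  have hderiv : ∀ y ∈ Set.Ici t, HasDerivAt (fun y : ℝ => -Real.exp (-(π * lam * y ^ 2)))
      (2 * π * lam * y * Real.exp (-(π * lam * y ^ 2))) y := by
    intro y _
    have h1 : HasDerivAt (fun y : ℝ => -(π * lam * y ^ 2)) (-(π * lam * (2 * y))) y := by
      have := ((hasDerivAt_pow 2 y).const_mul (π * lam)).neg
      refine this.congr_deriv ?_
      push_cast
      ring
    have h2 := (Real.hasDerivAt_exp _).comp y h1
    refine h2.neg.congr_deriv ?_
    ring
  have hpos : ∀ y ∈ Set.Ioi t, 0 ≤ 2 * π * lam * y * Real.exp (-(π * lam * y ^ 2)) := by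
    intro y hy
    have hy0 : 0 ≤ y := ht.trans (le_of_lt hy)
    exact mul_nonneg (mul_nonneg (by positivity) hy0) (Real.exp_nonneg _)
  have htend : Filter.Tendsto (fun y : ℝ => -Real.exp (-(π * lam * y ^ 2)))
      Filter.atTop (nhds 0) := by
    have h1 : Filter.Tendsto (fun y : ℝ => π * lam * y ^ 2) Filter.atTop Filter.atTop :=
      (Filter.tendsto_pow_atTop (two_ne_zero)).const_mul_atTop (by positivity)
    have h2 : Filter.Tendsto (fun y : ℝ => -(π * lam * y ^ 2)) Filter.atTop Filter.atBot :=
      Filter.tendsto_neg_atBot_iff.mpr h1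
    have h3 := (Real.tendsto_exp_atBot).comp h2
    simpa using h3.neg
  have hint : IntegrableOn (fun y => 2 * π * lam * y * Real.exp (-(π * lam * y ^ 2)))
      (Set.Ioi t) := integrableOn_Ioi_deriv_of_nonneg' hderiv hpos htend
  have hval : ∫ y in Set.Ioi t, 2 * π * lam * y * Real.exp (-(π * lam * y ^ 2)) =
      Real.exp (-(π * lam * t ^ 2)) := by
    rw [integral_Ioi_of_hasDerivAt_of_nonneg' hderiv hpos htend]
    simp
  rw [← ofReal_integral_eq_lintegral_ofReal hint
    ((ae_restrict_iff' measurableSet_Ioi).2 (Filter.Eventually.of_forall hpos)), hval]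

lemma lint_support_congr {g : ℝ → ENNReal} (hg0 : ∀ y ≤ (0:ℝ), g y = 0) {S T : Set ℝ}
    (hS : MeasurableSet S) (hT : MeasurableSet T) (h : ∀ y, 0 < y → (y ∈ S ↔ y ∈ T)) :
    ∫⁻ y in S, g y = ∫⁻ y in T, g y := by
  rw [← lintegral_indicator hS, ← lintegral_indicator hT]
  congr 1
  funext y
  by_cases hy : 0 < y
  · have hiff := h y hy
    by_cases hyS : y ∈ S
    · rw [Set.indicator_of_mem hyS, Set.indicator_of_mem (hiff.mp hyS)]
    · rw [Set.indicator_of_notMem hyS,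
        Set.indicator_of_notMem (fun hyT => hyS (hiff.mpr hyT))]
  · push_neg at hy
    have hgy : g y = 0 := hg0 y hy
    by_cases hyS : y ∈ S <;> by_cases hyT : y ∈ T <;>
      simp [Set.indicator_apply, hyS, hyT, hgy]

/-- Conditional serving-distance density for Case 1: given the event
`{X_M < c^{1/α_M} X_S^{α_S/α_M}}` of probability `p > 0`, the conditional density of `X_M` is
`f(x) = exp(−πλ_S c^{−2/α_S} x^{2α_M/α_S}) · 2πλ_M x exp(−πλ_M x²) / p` for `x ≥ 0`. -/
theorem stmt8 {Ω : Type*} [MeasureSpace Ω] [IsProbabilityMeasure (ℙ : Measure Ω)]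
    (lamM lamS aM aS c : ℝ) (hlamM : 0 < lamM) (hlamS : 0 < lamS)
    (haM : 0 < aM) (haS : 0 < aS) (hc : 0 < c)
    (XM XS : Ω → ℝ) (hXM : Measurable XM) (hXS : Measurable XS)
    (hindep : IndepFun XM XS ℙ)
    (hdM : Measure.map XM ℙ = volume.withDensity fun x => ENNReal.ofReal (rayleighPdf lamM x))
    (hdS : Measure.map XS ℙ = volume.withDensity fun x => ENNReal.ofReal (rayleighPdf lamS x))
    (p : ℝ)
    (hp : p = (ℙ {ω | XM ω < c ^ (1 / aM) * XS ω ^ (aS / aM)}).toReal)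
    (hppos : 0 < p) :
    Measure.map XM (ℙ[|{ω | XM ω < c ^ (1 / aM) * XS ω ^ (aS / aM)}])
      = volume.withDensity fun x => ENNReal.ofReal
          (if 0 ≤ x then
            Real.exp (-(π * lamS * c ^ (-(2 / aS)) * x ^ (2 * aM / aS)))
              * (2 * π * lamM * x * Real.exp (-(π * lamM * x ^ 2))) / p
          else 0) := by
  have hπ := Real.pi_pos
  have haM' : aM ≠ 0 := haM.ne'
  have haS' : aS ≠ 0 := haS.ne'
  set γ : ℝ := c ^ (1 / aM) with hγdef
  have hγ : 0 < γ := Real.rpow_pos_of_pos hc _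
  set r : ℝ := aS / aM with hrdef
  have hr : 0 < r := div_pos haS haM
  set E : Set Ω := {ω | XM ω < c ^ (1 / aM) * XS ω ^ (aS / aM)} with hEdef
  have hrpm : Measurable fun y : ℝ => γ * y ^ r :=
    measurable_const.mul (Real.continuous_rpow_const hr.le).measurable
  have hEmeas : MeasurableSet E :=
    measurableSet_lt hXM (measurable_const.mul
      ((Real.continuous_rpow_const hr.le).measurable.comp hXS))
  have hPE : ℙ E = ENNReal.ofReal p := by
    rw [hp]; exact (ENNReal.ofReal_toReal (measure_ne_top _ _)).symm
  set μM := Measure.map XM ℙ with hμM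
  set μS := Measure.map XS ℙ with hμS
  haveI : IsProbabilityMeasure μS := Measure.isProbabilityMeasure_map hXS.aemeasurable
  have hjoint : Measure.map (fun ω => (XM ω, XS ω)) ℙ = μM.prod μS :=
    (indepFun_iff_map_prod_eq_prod_map_map hXM.aemeasurable hXS.aemeasurable).mp hindep
  -- the per-x exponential factor
  set efac : ℝ → ℝ :=
    fun x => Real.exp (-(π * lamS * c ^ (-(2 / aS)) * x ^ (2 * aM / aS))) with hefac
  -- section measure computation for x > 0
  have hsecx : ∀ x : ℝ, 0 < x → μS {y | x < γ * y ^ r} = ENNReal.ofReal (efac x) := by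
    intro x hx
    set t : ℝ := c ^ (-(1 / aS)) * x ^ (aM / aS) with htdef
    have ht : 0 < t := mul_pos (Real.rpow_pos_of_pos hc _) (Real.rpow_pos_of_pos hx _)
    have hkey : γ * t ^ r = x := by
      rw [htdef, hγdef, hrdef,
        Real.mul_rpow (Real.rpow_nonneg hc.le _) (Real.rpow_nonneg hx.le _),
        ← Real.rpow_mul hc.le, ← Real.rpow_mul hx.le,
        show -(1 / aS) * (aS / aM) = -(1 / aM) by field_simp,
        show aM / aS * (aS / aM) = 1 by field_simp, Real.rpow_one,
        ← mul_assoc, ← Real.rpow_add hc]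
      norm_num
    have hSmeas : MeasurableSet {y : ℝ | x < γ * y ^ r} :=
      measurableSet_lt measurable_const hrpm
    have hset : μS {y | x < γ * y ^ r} = μS (Set.Ioi t) := by
      rw [hdS, withDensity_apply _ hSmeas, withDensity_apply _ measurableSet_Ioi]
      apply lint_support_congr
      · intro y hy; simp [rayleighPdf_nonpos lamS hy]
      · exact hSmeas
      · exact measurableSet_Ioi
      · intro y hy
        simp only [Set.mem_setOf_eq, Set.mem_Ioi]
        rw [← hkey, mul_lt_mul_iff_right₀ hγ, Real.rpow_lt_rpow_iff ht.le hy.le hr]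
    have hIoi : μS (Set.Ioi t) = ENNReal.ofReal (Real.exp (-(π * lamS * t ^ 2))) := by
      rw [hdS, withDensity_apply _ measurableSet_Ioi]
      calc ∫⁻ y in Set.Ioi t, ENNReal.ofReal (rayleighPdf lamS y)
          = ∫⁻ y in Set.Ioi t,
              ENNReal.ofReal (2 * π * lamS * y * Real.exp (-(π * lamS * y ^ 2))) := by
            apply setLIntegral_congr_fun measurableSet_Ioi
            intro y hy
            have hy0 : (0:ℝ) ≤ y := le_of_lt (ht.trans hy)
            beta_reduce
            rw [rayleighPdf, if_pos hy0]
        _ = ENNReal.ofReal (Real.exp (-(π * lamS * t ^ 2))) :=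
            tail_lintegral lamS t hlamS ht.le
    have ht2 : t ^ 2 = c ^ (-(2 / aS)) * x ^ (2 * aM / aS) := by
      rw [show t ^ 2 = t ^ ((2:ℕ):ℝ) from (Real.rpow_natCast t 2).symm, htdef,
        Real.mul_rpow (Real.rpow_nonneg hc.le _) (Real.rpow_nonneg hx.le _),
        ← Real.rpow_mul hc.le, ← Real.rpow_mul hx.le]
      push_cast
      rw [show -(1 / aS) * (2:ℝ) = -(2 / aS) by ring,
        show aM / aS * (2:ℝ) = 2 * aM / aS by ring]
    rw [hset, hIoi, hefac]
    congr 2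
    rw [mul_assoc (π * lamS), ← ht2]
  -- main computation of the restricted pushforward
  have key : ∀ A : Set ℝ, MeasurableSet A →
      ℙ (XM ⁻¹' A ∩ E) = ∫⁻ x in A, ENNReal.ofReal (rayleighPdf lamM x * efac x) := by
    intro A hA
    have hpair : Measurable fun ω => (XM ω, XS ω) := hXM.prodMk hXS
    set T : Set (ℝ × ℝ) := Prod.fst ⁻¹' A ∩ {q : ℝ × ℝ | q.1 < γ * q.2 ^ r} with hTdef
    have hT2 : MeasurableSet {q : ℝ × ℝ | q.1 < γ * q.2 ^ r} :=
      measurableSet_lt measurable_fst (measurable_const.mul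
        ((Real.continuous_rpow_const hr.le).measurable.comp measurable_snd))
    have hTmeas : MeasurableSet T := (measurable_fst hA).inter hT2
    have hpre : XM ⁻¹' A ∩ E = (fun ω => (XM ω, XS ω)) ⁻¹' T := by
      ext ω; simp [hTdef, hEdef, hγdef, hrdef]
    rw [hpre, ← Measure.map_apply hpair hTmeas, hjoint, Measure.prod_apply hTmeas]
    have hsec : ∀ x : ℝ, μS (Prod.mk x ⁻¹' T) =
        A.indicator (fun x => μS {y | x < γ * y ^ r}) x := by
      intro x
      by_cases hx : x ∈ A
      · have h1 : Prod.mk x ⁻¹' T = {y | x < γ * y ^ r} := by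
          ext y; simp [hTdef, hx]
        rw [h1, Set.indicator_of_mem hx]
      · have h1 : Prod.mk x ⁻¹' T = ∅ := by
          ext y; simp [hTdef, hx]
        rw [h1, Set.indicator_of_notMem hx]; simp
    simp_rw [hsec]
    have hFmeas : Measurable fun x : ℝ => μS {y | x < γ * y ^ r} :=
      measurable_measure_prodMk_left hT2
    rw [lintegral_indicator hA, hdM, restrict_withDensity hA,
      lintegral_withDensity_eq_lintegral_mul _
        ((measurable_rayleighPdf lamM).ennreal_ofReal) hFmeas]
    apply setLIntegral_congr_fun hA
    intro x _
    simp only [Pi.mul_apply]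
    rcases le_or_gt x 0 with hx | hx
    · simp [rayleighPdf_nonpos lamM hx]
    · rw [hsecx x hx, ← ENNReal.ofReal_mul (rayleighPdf_nonneg lamM hlamM x)]
  have hmapres : Measure.map XM (Measure.restrict ℙ E) =
      volume.withDensity (fun x => ENNReal.ofReal (rayleighPdf lamM x * efac x)) := by
    ext A hA
    rw [Measure.map_apply hXM hA, Measure.restrict_apply (hXM hA), withDensity_apply _ hA]
    exact key A hA
  have hgmeas : Measurable fun x => ENNReal.ofReal (rayleighPdf lamM x * efac x) := by
    apply Measurable.ennreal_ofReal
    exact (measurable_rayleighPdf lamM).mul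
      (Real.continuous_exp.measurable.comp
        ((measurable_const.mul
          (Real.continuous_rpow_const (by positivity)).measurable).neg))
  rw [show (ℙ[|E]) = (ℙ E)⁻¹ • Measure.restrict ℙ E from rfl,
    Measure.map_smul, hmapres, hPE, ← withDensity_smul _ hgmeas]
  congr 1
  funext x
  simp only [Pi.smul_apply, smul_eq_mul]
  rcases le_or_gt x 0 with hx | hx
  · rcases lt_or_eq_of_le hx with hx' | hx'
    · rw [if_neg (not_le.mpr hx'), rayleighPdf_nonpos lamM hx]
      simp
    · subst hx'
      simp [rayleighPdf]
  · rw [if_pos hx.le]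
    rw [show rayleighPdf lamM x = 2 * π * lamM * x * Real.exp (-(π * lamM * x ^ 2)) by
      rw [rayleighPdf, if_pos hx.le]]
    rw [ENNReal.ofReal_div_of_pos hppos, ENNReal.div_eq_inv_mul]
    congr 1
    rw [mul_comm]
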